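/- The Z-channel capacity C(φ) = log₂(1 + (1−φ)·φ^{φ/(1−φ)}) is strictly decreasing in φ on (0,1). -/

import Mathlib

open Real

noncomputable def zh (φ : ℝ) : ℝ := Real.log (1 - φ) + φ / (1 - φ) * Real.log φ

lemma zh_hasDerivAt {x : ℝ} (hx : x ∈ Set.Ioo (0:ℝ) 1) :
    HasDerivAt zh (Real.log x / (1 - x)^2) x := by
  have hx0 : x ≠ 0 := hx.1.ne'
  have h1x : (1 : ℝ) - x ≠ 0 := by have := hx.2; intro h; linarith
  have d1 : HasDerivAt (fun φ : ℝ => (1:ℝ) - φ) (-1) x := by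
    simpa using (hasDerivAt_id x).const_sub 1
  have d2 : HasDerivAt (fun φ : ℝ => Real.log (1 - φ)) (-1 / (1 - x)) x := d1.log h1x
  have d3 : HasDerivAt (fun φ : ℝ => φ / (1 - φ))
      ((1 * (1 - x) - x * (-1)) / (1 - x)^2) x := (hasDerivAt_id x).div d1 h1x
  have d4 : HasDerivAt Real.log x⁻¹ x := Real.hasDerivAt_log hx0
  have d5 := d2.add (d3.mul d4)
  refine d5.congr_deriv ?_
  field_simp
  ring

lemma zh_strictAntiOn : StrictAntiOn zh (Set.Ioo (0:ℝ) 1) := by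
  apply strictAntiOn_of_deriv_neg (convex_Ioo 0 1)
  · exact fun x hx => (zh_hasDerivAt hx).continuousAt.continuousWithinAt
  · intro x hx
    rw [interior_Ioo] at hx
    rw [(zh_hasDerivAt hx).deriv]
    have hlog : Real.log x < 0 := Real.log_neg hx.1 hx.2
    have : (0:ℝ) < (1 - x)^2 := pow_pos (by linarith [hx.2]) 2
    exact div_neg_of_neg_of_pos hlog this

lemma zh_key {z : ℝ} (hz : z ∈ Set.Ioo (0:ℝ) 1) :
    (1 - z) * z ^ (z / (1 - z)) = Real.exp (zh z) := by
  rw [zh, Real.exp_add, Real.exp_log (by linarith [hz.2] : (0:ℝ) < 1 - z),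
    Real.rpow_def_of_pos hz.1]
  ring_nf

/-- The Z-channel capacity `C(φ) = log₂(1 + (1−φ)·φ^{φ/(1−φ)})` is strictly
decreasing in the crossover probability `φ` on `(0,1)`. -/
theorem zChannel_capacity_strictAnti :
    StrictAntiOn (fun φ : ℝ => logb 2 (1 + (1 - φ) * φ ^ (φ / (1 - φ))))
      (Set.Ioo (0 : ℝ) 1) := by
  intro x hx y hy hxy
  simp only
  rw [zh_key hx, zh_key hy]
  have h : Real.exp (zh y) < Real.exp (zh x) :=
    Real.exp_lt_exp.mpr (zh_strictAntiOn hx hy hxy)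
  have hpos : (0:ℝ) < 1 + Real.exp (zh y) := by positivity
  exact Real.logb_lt_logb (by norm_num) hpos (by linarith)
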